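/- (Uhlenbeck) Let a_1,…,a_{n+1} be pairwise distinct reals and for B = (b_1,…,b_{n+1}) ∈ ℝ^{n+1} define F_B = (1/2) ∑_{i<j} ((b_i−b_j)/(a_i−a_j)) M_{ij}^2 + ∑_i b_i (X^i)^2 on T*S^n. Then for any B, B′ ∈ ℝ^{n+1}, the functions F_B and F_{B′} Poisson commute with respect to the canonical Poisson structure on T*S^n. -/

import Mathlib

open scoped BigOperators

/-- Ambient coordinates on `T*Sⁿ ⊂ ℝ^{n+1} × ℝ^{n+1}`: pairs `(x, p)`. -/
abbrev Phase (N : ℕ) := (Fin N → ℝ) × (Fin N → ℝ)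

/-- The canonical Poisson bracket in the ambient coordinates `(x, p)`:
`{F,G} = ∑ₖ (∂F/∂pₖ ∂G/∂xₖ - ∂F/∂xₖ ∂G/∂pₖ)`. -/
noncomputable def pb {N : ℕ} (F G : Phase N → ℝ) (z : Phase N) : ℝ :=
  ∑ k, (fderiv ℝ F z ((0 : Fin N → ℝ), Pi.single k 1)
          * fderiv ℝ G z (Pi.single k 1, (0 : Fin N → ℝ))
      - fderiv ℝ F z (Pi.single k 1, (0 : Fin N → ℝ))
          * fderiv ℝ G z ((0 : Fin N → ℝ), Pi.single k 1))

/-- `T*Sⁿ` realized as the constraint set `{|x| = 1, ⟨x,p⟩ = 0}`. -/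
def TS (N : ℕ) : Set (Phase N) := {z | (∑ k, (z.1 k)^2 = 1) ∧ (∑ k, z.1 k * z.2 k = 0)}

/-- Momentum function `M_{ij}` of the rotation `Xⁱ ∂_{Xʲ} - Xʲ ∂_{Xⁱ}`. -/
def Mf {N : ℕ} (i j : Fin N) (z : Phase N) : ℝ := z.1 i * z.2 j - z.1 j * z.2 i

/-- The Uhlenbeck integral
`F_B = (1/2) ∑_{i<j} ((bᵢ-bⱼ)/(aᵢ-aⱼ)) M_{ij}² + ∑ᵢ bᵢ (Xⁱ)²`. -/
noncomputable def FB {N : ℕ} (a B : Fin N → ℝ) (z : Phase N) : ℝ :=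
  (1/2) * ∑ i, ∑ j ∈ Finset.Ioi i, ((B i - B j)/(a i - a j)) * (Mf i j z)^2
    + ∑ i, B i * (z.1 i)^2

/-! ### Auxiliary material for the proof -/

open Finset

/-- The symmetric coefficient `(Bᵢ-Bⱼ)/(aᵢ-aⱼ)`. -/
noncomputable def cc {N : ℕ} (a B : Fin N → ℝ) (i j : Fin N) : ℝ := (B i - B j)/(a i - a j)

lemma cc_symm {N : ℕ} (a B : Fin N → ℝ) (i j : Fin N) : cc a B i j = cc a B j i := by
  unfold cc
  rw [show B j - B i = -(B i - B j) by ring, show a j - a i = -(a i - a j) by ring,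
    neg_div_neg_eq]

/-- Triangular sums of symmetric, diagonal-free arrays are half the full sum. -/
lemma Usum_tri {N : ℕ} (g : Fin N → Fin N → ℝ) (hsym : ∀ i j, g i j = g j i)
    (hdiag : ∀ i, g i i = 0) :
    ∑ i, ∑ j ∈ Finset.Ioi i, g i j = (1/2) * ∑ i, ∑ j, g i j := by
  have h := Finset.sum_sum_Ioi_add_eq_sum_sum_off_diag (fun i j => g i j)
  have h3 : ∑ i : Fin N, ∑ j ∈ Ioi i, (g j i + g i j) = ∑ i : Fin N, ∑ j : Fin N, g i j := by
    rw [h]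
    refine Eq.trans (Finset.sum_congr rfl fun i _ =>
      Finset.sum_subset (Finset.subset_univ _) fun j _ hj => ?_) ?_
    · have : j = i := by simpa using hj
      rw [this, hdiag]
    · rw [Finset.sum_comm]
  have h4 : ∑ i : Fin N, ∑ j ∈ Ioi i, (g j i + g i j)
      = 2 * ∑ i : Fin N, ∑ j ∈ Ioi i, g i j := by
    rw [Finset.mul_sum]
    refine Finset.sum_congr rfl fun i _ => ?_
    rw [Finset.mul_sum]
    exact Finset.sum_congr rfl fun j _ => by rw [hsym j i]; ring
  rw [h4] at h3; linarith

/-- Coordinate functionals. -/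
noncomputable def Xc {N : ℕ} (i : Fin N) : Phase N →L[ℝ] ℝ :=
  (ContinuousLinearMap.proj i).comp (ContinuousLinearMap.fst ℝ (Fin N → ℝ) (Fin N → ℝ))
noncomputable def Pc {N : ℕ} (i : Fin N) : Phase N →L[ℝ] ℝ :=
  (ContinuousLinearMap.proj i).comp (ContinuousLinearMap.snd ℝ (Fin N → ℝ) (Fin N → ℝ))

@[simp] lemma Xc_apply {N : ℕ} (i : Fin N) (v : Phase N) : Xc i v = v.1 i := rfl
@[simp] lemma Pc_apply {N : ℕ} (i : Fin N) (v : Phase N) : Pc i v = v.2 i := rfl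

lemma hasFDerivAt_X {N : ℕ} (i : Fin N) (z : Phase N) :
    HasFDerivAt (fun z : Phase N => z.1 i) (Xc i) z := (Xc i).hasFDerivAt

lemma hasFDerivAt_P {N : ℕ} (i : Fin N) (z : Phase N) :
    HasFDerivAt (fun z : Phase N => z.2 i) (Pc i) z := (Pc i).hasFDerivAt

noncomputable def DMf {N : ℕ} (i j : Fin N) (z : Phase N) : Phase N →L[ℝ] ℝ :=
  (z.1 i • Pc j + z.2 j • Xc i) - (z.1 j • Pc i + z.2 i • Xc j)

lemma hasFDerivAt_Mf {N : ℕ} (i j : Fin N) (z : Phase N) :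
    HasFDerivAt (Mf i j) (DMf i j z) z :=
  ((hasFDerivAt_X i z).mul (hasFDerivAt_P j z)).sub
    ((hasFDerivAt_X j z).mul (hasFDerivAt_P i z))

/-- `FB` rewritten as a full double sum. -/
noncomputable def F4 {N : ℕ} (c : Fin N → Fin N → ℝ) (B : Fin N → ℝ) (z : Phase N) : ℝ :=
  (1/4) * ∑ i, ∑ j, c i j * (Mf i j z)^2 + ∑ i, B i * (z.1 i)^2

noncomputable def LF4 {N : ℕ} (c : Fin N → Fin N → ℝ) (B : Fin N → ℝ) (z : Phase N) :
    Phase N →L[ℝ] ℝ :=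
  (1/4 : ℝ) • (∑ i, ∑ j, c i j • (Mf i j z • DMf i j z + Mf i j z • DMf i j z))
    + ∑ i, B i • (z.1 i • Xc i + z.1 i • Xc i)

lemma hasFDerivAt_F4 {N : ℕ} (c : Fin N → Fin N → ℝ) (B : Fin N → ℝ) (z : Phase N) :
    HasFDerivAt (F4 c B) (LF4 c B z) z := by
  refine HasFDerivAt.add ?_ ?_
  · refine HasFDerivAt.const_mul ?_ _
    refine HasFDerivAt.fun_sum fun i _ => ?_
    refine HasFDerivAt.fun_sum fun j _ => ?_
    refine HasFDerivAt.const_mul ?_ _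
    simpa [pow_two] using (hasFDerivAt_Mf i j z).fun_mul (hasFDerivAt_Mf i j z)
  · refine HasFDerivAt.fun_sum fun i _ => ?_
    refine HasFDerivAt.const_mul ?_ _
    simpa [pow_two] using (hasFDerivAt_X i z).fun_mul (hasFDerivAt_X i z)

lemma LF4_applyX {N : ℕ} (c : Fin N → Fin N → ℝ) (B : Fin N → ℝ) (z : Phase N) (k : Fin N)
    (hsym : ∀ i j, c i j = c j i) :
    LF4 c B z (Pi.single k 1, (0 : Fin N → ℝ))
      = ∑ j, c k j * Mf k j z * z.2 j + 2 * B k * z.1 k := by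
  simp only [LF4, ContinuousLinearMap.add_apply, ContinuousLinearMap.smul_apply,
    ContinuousLinearMap.coe_sum', Finset.sum_apply, DMf, ContinuousLinearMap.coe_sub',
    Pi.sub_apply, Xc_apply, Pc_apply, Pi.single_apply, Pi.zero_apply, smul_eq_mul]
  have e1 : ∀ i j : Fin N, c i j * (Mf i j z * (z.1 i * 0 + z.2 j * (if i = k then 1 else 0) - (z.1 j * 0 + z.2 i * (if j = k then 1 else 0))) + Mf i j z * (z.1 i * 0 + z.2 j * (if i = k then 1 else 0) - (z.1 j * 0 + z.2 i * (if j = k then 1 else 0))))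
      = (if i = k then 2 * (c i j * Mf i j z * z.2 j) else 0) - (if j = k then 2 * (c i j * Mf i j z * z.2 i) else 0) := by
    intro i j; by_cases h1 : i = k <;> by_cases h2 : j = k <;> simp [h1, h2, Mf] <;> ring
  simp only [e1, Finset.sum_sub_distrib, ← Finset.sum_ite_eq' Finset.univ k,
    Finset.sum_ite_eq', Finset.mem_univ, if_true]
  have e2 : ∀ x : Fin N, (∑ x1 : Fin N, if x = k then 2 * (c x x1 * Mf x x1 z * z.2 x1) else 0)
      = if x = k then ∑ x1 : Fin N, 2 * (c x x1 * Mf x x1 z * z.2 x1) else 0 := by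
    intro x; split <;> simp
  rw [Finset.sum_congr rfl fun x _ => e2 x]
  rw [Finset.sum_ite_eq' Finset.univ k]
  have e3 : ∑ x : Fin N, 2 * (c x k * Mf x k z * z.2 x)
      = -∑ x : Fin N, 2 * (c k x * Mf k x z * z.2 x) := by
    rw [← Finset.sum_neg_distrib]
    refine Finset.sum_congr rfl fun x _ => ?_
    rw [hsym x k]; simp [Mf]; ring
  have e4 : ∑ x : Fin N, B x * ((z.1 x * if x = k then 1 else 0) + z.1 x * if x = k then 1 else 0)
      = B k * (z.1 k + z.1 k) := by
    rw [Finset.sum_eq_single k (fun x _ hx => by simp [hx]) (by simp)]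
    simp
  rw [e3, e4]
  have e5 : ∑ x : Fin N, 2 * (c k x * Mf k x z * z.2 x)
      = 2 * ∑ j, c k j * Mf k j z * z.2 j := by
    rw [Finset.mul_sum]
  rw [e5]
  simp only [Finset.mem_univ, if_true]
  ring

lemma LF4_applyP {N : ℕ} (c : Fin N → Fin N → ℝ) (B : Fin N → ℝ) (z : Phase N) (k : Fin N)
    (hsym : ∀ i j, c i j = c j i) :
    LF4 c B z ((0 : Fin N → ℝ), Pi.single k 1)
      = -∑ j, c k j * Mf k j z * z.1 j := by
  simp only [LF4, ContinuousLinearMap.add_apply, ContinuousLinearMap.smul_apply,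
    ContinuousLinearMap.coe_sum', Finset.sum_apply, DMf, ContinuousLinearMap.coe_sub',
    Pi.sub_apply, Xc_apply, Pc_apply, Pi.single_apply, Pi.zero_apply, smul_eq_mul]
  have e1 : ∀ i j : Fin N, c i j * (Mf i j z * ((z.1 i * if j = k then 1 else 0) + z.2 j * 0 - ((z.1 j * if i = k then 1 else 0) + z.2 i * 0)) + Mf i j z * ((z.1 i * if j = k then 1 else 0) + z.2 j * 0 - ((z.1 j * if i = k then 1 else 0) + z.2 i * 0)))
      = (if j = k then 2 * (c i j * Mf i j z * z.1 i) else 0) - (if i = k then 2 * (c i j * Mf i j z * z.1 j) else 0) := by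
    intro i j; by_cases h1 : i = k <;> by_cases h2 : j = k <;> simp [h1, h2, Mf] <;> ring
  simp only [e1, Finset.sum_sub_distrib, Finset.sum_ite_eq', Finset.mem_univ, if_true]
  have e2 : ∀ x : Fin N, (∑ x1 : Fin N, if x = k then 2 * (c x x1 * Mf x x1 z * z.1 x1) else 0)
      = if x = k then ∑ x1 : Fin N, 2 * (c x x1 * Mf x x1 z * z.1 x1) else 0 := by
    intro x; split <;> simp
  rw [Finset.sum_congr rfl fun x _ => e2 x, Finset.sum_ite_eq' Finset.univ k]
  have e3 : ∑ x : Fin N, 2 * (c x k * Mf x k z * z.1 x)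
      = -∑ x : Fin N, 2 * (c k x * Mf k x z * z.1 x) := by
    rw [← Finset.sum_neg_distrib]
    refine Finset.sum_congr rfl fun x _ => ?_
    rw [hsym x k]; simp [Mf]; ring
  have e5 : ∑ x : Fin N, 2 * (c k x * Mf k x z * z.1 x)
      = 2 * ∑ j, c k j * Mf k j z * z.1 j := by
    rw [Finset.mul_sum]
  rw [e3, e5]
  simp only [Finset.mem_univ, if_true]
  simp
  ring

lemma FB_eq_F4 {N : ℕ} (a B : Fin N → ℝ) : FB a B = F4 (cc a B) B := by
  funext z
  unfold FB F4
  congr 1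
  simp only [cc]
  rw [Usum_tri (fun i j => (B i - B j)/(a i - a j) * (Mf i j z)^2)
    (fun i j => by
      have hcs := cc_symm a B i j
      simp only [cc] at hcs
      rw [hcs, show Mf i j z = -Mf j i z by simp only [Mf]; ring]
      ring)
    (fun i => by simp [Mf])]
  ring

lemma fderiv_FB_X {N : ℕ} (a B : Fin N → ℝ) (z : Phase N) (k : Fin N) :
    fderiv ℝ (FB a B) z (Pi.single k 1, (0 : Fin N → ℝ))
      = ∑ j, cc a B k j * Mf k j z * z.2 j + 2 * B k * z.1 k := by
  rw [FB_eq_F4, (hasFDerivAt_F4 (cc a B) B z).fderiv]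
  exact LF4_applyX _ _ _ _ (cc_symm a B)

lemma fderiv_FB_P {N : ℕ} (a B : Fin N → ℝ) (z : Phase N) (k : Fin N) :
    fderiv ℝ (FB a B) z ((0 : Fin N → ℝ), Pi.single k 1)
      = -∑ j, cc a B k j * Mf k j z * z.1 j := by
  rw [FB_eq_F4, (hasFDerivAt_F4 (cc a B) B z).fderiv]
  exact LF4_applyP _ _ _ _ (cc_symm a B)

lemma Usum3_swap12 {ι : Type*} [Fintype ι] (f : ι → ι → ι → ℝ) :
    ∑ k, ∑ i, ∑ j, f k i j = ∑ k, ∑ i, ∑ j, f i k j := Finset.sum_comm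

lemma Usum3_swap23 {ι : Type*} [Fintype ι] (f : ι → ι → ι → ℝ) :
    ∑ k, ∑ i, ∑ j, f k i j = ∑ k, ∑ i, ∑ j, f k j i :=
  Finset.sum_congr rfl fun _ _ => Finset.sum_comm

lemma Usum3_zero {ι : Type*} [Fintype ι] (f : ι → ι → ι → ℝ)
    (hp : ∀ k i j, f k i j + f k j i + f i j k + f i k j + f j k i + f j i k = 0) :
    ∑ k, ∑ i, ∑ j, f k i j = 0 := by
  have h1 : ∑ k, ∑ i, ∑ j, f k j i = ∑ k, ∑ i, ∑ j, f k i j := (Usum3_swap23 f).symm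
  have h2 : ∑ k, ∑ i, ∑ j, f i k j = ∑ k, ∑ i, ∑ j, f k i j := (Usum3_swap12 f).symm
  have h3 : ∑ k, ∑ i, ∑ j, f i j k = ∑ k, ∑ i, ∑ j, f k i j := by
    rw [Usum3_swap12 (fun k i j => f i j k)]; exact h1
  have h4 : ∑ k, ∑ i, ∑ j, f j k i = ∑ k, ∑ i, ∑ j, f k i j := by
    rw [Usum3_swap23 (fun k i j => f j k i)]; exact h2
  have h5 : ∑ k, ∑ i, ∑ j, f j i k = ∑ k, ∑ i, ∑ j, f k i j := by
    rw [Usum3_swap12 (fun k i j => f j i k)]; exact h4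
  have key : ∑ k, ∑ i, ∑ j,
      (f k i j + f k j i + f i j k + f i k j + f j k i + f j i k) = 0 :=
    Finset.sum_eq_zero fun k _ => Finset.sum_eq_zero fun i _ =>
      Finset.sum_eq_zero fun j _ => hp k i j
  simp only [Finset.sum_add_distrib] at key
  rw [h1, h2, h3, h4, h5] at key
  linarith [key]

lemma Usum2_zero {ι : Type*} [Fintype ι] (f : ι → ι → ℝ)
    (hp : ∀ k i, f k i + f i k = 0) :
    ∑ k, ∑ i, f k i = 0 := by
  have h1 : ∑ k, ∑ i, f i k = ∑ k, ∑ i, f k i := Finset.sum_comm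
  have key : ∑ k, ∑ i, (f k i + f i k) = 0 :=
    Finset.sum_eq_zero fun k _ => Finset.sum_eq_zero fun i _ => hp k i
  simp only [Finset.sum_add_distrib] at key
  rw [h1] at key
  linarith [key]

set_option maxHeartbeats 2000000 in
/-- **Uhlenbeck.** For pairwise distinct `a₁,…,a_{n+1}` and any
`B, B' ∈ ℝ^{n+1}`, the functions `F_B` and `F_{B'}` Poisson commute on `T*Sⁿ`
with respect to the canonical Poisson structure. -/
theorem uhlenbeck_integrals_commute (n : ℕ) (a : Fin (n+1) → ℝ)
    (ha : Function.Injective a) :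
    ∀ B B' : Fin (n+1) → ℝ, ∀ z ∈ TS (n+1), pb (FB a B) (FB a B') z = 0 := by
  intro B B' z _
  set c := cc a B with hc
  set d := cc a B' with hd
  set h : Fin (n+1) → Fin (n+1) → Fin (n+1) → ℝ := fun k i j =>
    (d k i * c k j - c k i * d k j) * Mf k i z * Mf k j z * z.1 i * z.2 j with hh
  set t : Fin (n+1) → Fin (n+1) → ℝ := fun k i =>
    2 * z.1 k * (B k * (d k i * Mf k i z * z.1 i) - B' k * (c k i * Mf k i z * z.1 i)) with ht
  have expand : ∀ k,
      fderiv ℝ (FB a B) z ((0 : Fin (n+1) → ℝ), Pi.single k 1)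
          * fderiv ℝ (FB a B') z (Pi.single k 1, (0 : Fin (n+1) → ℝ))
        - fderiv ℝ (FB a B) z (Pi.single k 1, (0 : Fin (n+1) → ℝ))
          * fderiv ℝ (FB a B') z ((0 : Fin (n+1) → ℝ), Pi.single k 1)
      = (∑ i, ∑ j, h k i j) + ∑ i, t k i := by
    intro k
    rw [fderiv_FB_X, fderiv_FB_P, fderiv_FB_X, fderiv_FB_P]
    have hAB : (∑ i, d k i * Mf k i z * z.1 i) * (∑ j, c k j * Mf k j z * z.2 j)
        = ∑ i, ∑ j, (d k i * Mf k i z * z.1 i) * (c k j * Mf k j z * z.2 j) :=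
      Finset.sum_mul_sum _ _ _ _
    have hBA : (∑ i, c k i * Mf k i z * z.1 i) * (∑ j, d k j * Mf k j z * z.2 j)
        = ∑ i, ∑ j, (c k i * Mf k i z * z.1 i) * (d k j * Mf k j z * z.2 j) :=
      Finset.sum_mul_sum _ _ _ _
    have hH : (∑ i, ∑ j, h k i j)
        = (∑ i, d k i * Mf k i z * z.1 i) * (∑ j, c k j * Mf k j z * z.2 j)
          - (∑ i, c k i * Mf k i z * z.1 i) * (∑ j, d k j * Mf k j z * z.2 j) := by
      rw [hAB, hBA, ← Finset.sum_sub_distrib]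
      refine Finset.sum_congr rfl fun i _ => ?_
      rw [← Finset.sum_sub_distrib]
      refine Finset.sum_congr rfl fun j _ => ?_
      simp only [hh]; ring
    have hT : (∑ i, t k i)
        = 2 * z.1 k * (B k * ∑ i, d k i * Mf k i z * z.1 i
            - B' k * ∑ i, c k i * Mf k i z * z.1 i) := by
      simp only [ht, Finset.mul_sum, mul_sub, Finset.sum_sub_distrib]
    rw [hH, hT]
    ring
  rw [pb, Finset.sum_congr rfl fun k _ => expand k, Finset.sum_add_distrib]
  have hHzero : ∑ k, ∑ i, ∑ j, h k i j = 0 := by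
    refine Usum3_zero h fun k i j => ?_
    simp only [hh, hc, hd, cc, Mf]
    by_cases hki : k = i
    · subst hki; ring
    by_cases hkj : k = j
    · subst hkj; ring
    by_cases hij : i = j
    · subst hij; ring
    have d1 : a k - a i ≠ 0 := sub_ne_zero.mpr (fun h => hki (ha h))
    have d2 : a k - a j ≠ 0 := sub_ne_zero.mpr (fun h => hkj (ha h))
    have d3 : a i - a j ≠ 0 := sub_ne_zero.mpr (fun h => hij (ha h))
    have d4 : a i - a k ≠ 0 := fun h => d1 (by linarith [sub_eq_zero.mp h])
    have d5 : a j - a k ≠ 0 := fun h => d2 (by linarith [sub_eq_zero.mp h])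
    have d6 : a j - a i ≠ 0 := fun h => d3 (by linarith [sub_eq_zero.mp h])
    field_simp
    ring
  have hTzero : ∑ k, ∑ i, t k i = 0 := by
    refine Usum2_zero t fun k i => ?_
    simp only [ht, hc, hd, cc, Mf]
    by_cases hki : k = i
    · subst hki; ring
    have d1 : a k - a i ≠ 0 := sub_ne_zero.mpr (fun h => hki (ha h))
    have d4 : a i - a k ≠ 0 := fun h => d1 (by linarith [sub_eq_zero.mp h])
    field_simp
    ring
  rw [hHzero, hTzero, add_zero]
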